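/- Fix σ_w > 0, d_x, d_u ∈ ℕ, symmetric matrices Â-related data matrix (Â B̂) ∈ ℝ^{d_x×(d_x+d_u)} and D ≻ 0 of size (d_x+d_u). The following are equivalent: (i) there exist U ⪰ 0 (of size d_x+d_u, with top-left d_x×d_x block U_xx) and s ∈ (0,1) such that [[U_xx − (Â B̂)U(Â B̂)^⊤ − I, (Â B̂)U],[U(Â B̂)^⊤, sD − U]] ⪰ 0; (ii) there exist Σ ⪰ 0 (same size, top-left block Σ_xx) and t ≥ 0 such that [[Σ_xx − (Â B̂)Σ(Â B̂)^⊤ − (t+σ_w²)I, (Â B̂)Σ],[Σ(Â B̂)^⊤, tD − Σ]] ⪰ 0. Moreover, the maps s ↦ t = sσ_w²/(1−s), U ↦ Σ = σ_w²U/(1−s) and t ↦ s = t/(t+σ_w²), Σ ↦ U = Σ/(t+σ_w²) realize the equivalence. -/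

import Mathlib

open Matrix

variable {dx du : ℕ}

/-- The block LMI of the Robust SLS feasibility condition (constraint (i)). -/
def slsConstraint (AB : Matrix (Fin dx) (Fin dx ⊕ Fin du) ℝ)
    (D U : Matrix (Fin dx ⊕ Fin du) (Fin dx ⊕ Fin du) ℝ) (s : ℝ) : Prop :=
  (Matrix.fromBlocks
    (U.toBlocks₁₁ - AB * U * ABᵀ - 1) (AB * U)
    (U * ABᵀ) (s • D - U)).PosSemidef

/-- The block LMI of the Robust LQR feasibility condition (constraint (ii)). -/
def lqrConstraint (σw : ℝ) (AB : Matrix (Fin dx) (Fin dx ⊕ Fin du) ℝ)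
    (D S : Matrix (Fin dx ⊕ Fin du) (Fin dx ⊕ Fin du) ℝ) (t : ℝ) : Prop :=
  (Matrix.fromBlocks
    (S.toBlocks₁₁ - AB * S * ABᵀ - (t + σw ^ 2) • 1) (AB * S)
    (S * ABᵀ) (t • D - S)).PosSemidef

private lemma psd_smul {n : Type*} [Fintype n] {M : Matrix n n ℝ} (hM : M.PosSemidef)
    {c : ℝ} (hc : 0 ≤ c) : (c • M).PosSemidef := by
  refine Matrix.PosSemidef.of_dotProduct_mulVec_nonneg ?_ (fun x => ?_)
  · show (c • M)ᴴ = c • M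
    rw [conjTranspose_smul, star_trivial, hM.1.eq]
  simp only [smul_mulVec, dotProduct_smul, smul_eq_mul, RCLike.star_def]
  exact mul_nonneg hc (hM.dotProduct_mulVec_nonneg x)

private lemma psd_neg_eq_zero {n : Type*} [Fintype n] [DecidableEq n]
    {M : Matrix n n ℝ} (h1 : M.PosSemidef) (h2 : (-M).PosSemidef) : M = 0 := by
  have hx : ∀ x : n → ℝ, M *ᵥ x = 0 := by
    intro x
    refine (h1.dotProduct_mulVec_zero_iff x).mp ?_
    have hb := h2.dotProduct_mulVec_nonneg x
    simp only [neg_mulVec, dotProduct_neg, star_trivial] at hb ⊢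
    have ha := h1.dotProduct_mulVec_nonneg x
    simp only [star_trivial] at ha
    linarith
  ext i j
  have := congrFun (hx (Pi.single j 1)) i
  simpa [mulVec, dotProduct, Pi.single_apply, mul_ite] using this

private lemma psd_fromBlocks_diag {n m : Type*} [Fintype n] [Fintype m]
    {A : Matrix n n ℝ} {B : Matrix m m ℝ} (hA : A.PosSemidef) (hB : B.PosSemidef) :
    (Matrix.fromBlocks A 0 0 B).PosSemidef := by
  refine Matrix.PosSemidef.of_dotProduct_mulVec_nonneg ?_ ?_
  · show _ᴴ = _
    rw [Matrix.fromBlocks_conjTranspose, hA.1.eq, hB.1.eq, conjTranspose_zero,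
      conjTranspose_zero]
  · intro x
    rw [Matrix.fromBlocks_mulVec]
    have hxe : star x = Sum.elim (star (x ∘ Sum.inl)) (star (x ∘ Sum.inr)) := by
      funext i; cases i <;> rfl
    rw [hxe]
    simp only [Matrix.zero_mulVec, add_zero, zero_add, sumElim_dotProduct_sumElim]
    exact add_nonneg (hA.dotProduct_mulVec_nonneg _) (hB.dotProduct_mulVec_nonneg _)

private lemma fb_inl {n m l o : Type*} (A : Matrix n l ℝ) (B : Matrix n m ℝ)
    (C : Matrix o l ℝ) (D : Matrix o m ℝ) :
    (Matrix.fromBlocks A B C D).submatrix Sum.inl Sum.inl = A := by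
  ext i j; simp [Matrix.fromBlocks]

private lemma fb_inr {n m l o : Type*} (A : Matrix n l ℝ) (B : Matrix n m ℝ)
    (C : Matrix o l ℝ) (D : Matrix o m ℝ) :
    (Matrix.fromBlocks A B C D).submatrix Sum.inr Sum.inr = D := by
  ext i j; simp [Matrix.fromBlocks]

private lemma toBlocks₁₁_smul (c : ℝ)
    (U : Matrix (Fin dx ⊕ Fin du) (Fin dx ⊕ Fin du) ℝ) :
    (c • U).toBlocks₁₁ = c • U.toBlocks₁₁ := rfl

private lemma key (σw : ℝ) (AB : Matrix (Fin dx) (Fin dx ⊕ Fin du) ℝ)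
    (D U : Matrix (Fin dx ⊕ Fin du) (Fin dx ⊕ Fin du) ℝ) (c s t : ℝ)
    (hct : t + σw ^ 2 = c) (hts : t = c * s) :
    Matrix.fromBlocks
      ((c • U).toBlocks₁₁ - AB * (c • U) * ABᵀ - (t + σw ^ 2) • 1) (AB * (c • U))
      ((c • U) * ABᵀ) (t • D - c • U)
    = c • Matrix.fromBlocks
      (U.toBlocks₁₁ - AB * U * ABᵀ - 1) (AB * U)
      (U * ABᵀ) (s • D - U) := by
  rw [Matrix.fromBlocks_smul, hct, hts]
  simp only [toBlocks₁₁_smul, Matrix.mul_smul, Matrix.smul_mul, smul_sub, smul_smul]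

private lemma key2 (σw : ℝ) (AB : Matrix (Fin dx) (Fin dx ⊕ Fin du) ℝ)
    (D S : Matrix (Fin dx ⊕ Fin du) (Fin dx ⊕ Fin du) ℝ) (c s t : ℝ)
    (hct : c * (t + σw ^ 2) = 1) (hts : s = c * t) :
    Matrix.fromBlocks
      ((c • S).toBlocks₁₁ - AB * (c • S) * ABᵀ - 1) (AB * (c • S))
      ((c • S) * ABᵀ) (s • D - c • S)
    = c • Matrix.fromBlocks
      (S.toBlocks₁₁ - AB * S * ABᵀ - (t + σw ^ 2) • 1) (AB * S)
      (S * ABᵀ) (t • D - S) := by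
  rw [Matrix.fromBlocks_smul, hts]
  simp only [toBlocks₁₁_smul, Matrix.mul_smul, Matrix.smul_mul, smul_sub, smul_smul,
    hct, one_smul]

/-- feasibility of the Robust SLS LMI and of the Robust LQR LMI are
equivalent, and the equivalence is realized by the explicit maps
`t = s σ_w²/(1−s)`, `Σ = σ_w² U/(1−s)` and `s = t/(t+σ_w²)`, `U = Σ/(t+σ_w²)`. -/
theorem sls_lqr_feasibility_equivalence (σw : ℝ) (hσw : 0 < σw)
    (AB : Matrix (Fin dx) (Fin dx ⊕ Fin du) ℝ)
    (D : Matrix (Fin dx ⊕ Fin du) (Fin dx ⊕ Fin du) ℝ) (hD : D.PosDef) :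
    ((∃ (U : Matrix (Fin dx ⊕ Fin du) (Fin dx ⊕ Fin du) ℝ) (s : ℝ),
        U.PosSemidef ∧ 0 < s ∧ s < 1 ∧ slsConstraint AB D U s) ↔
      (∃ (S : Matrix (Fin dx ⊕ Fin du) (Fin dx ⊕ Fin du) ℝ) (t : ℝ),
        S.PosSemidef ∧ 0 ≤ t ∧ lqrConstraint σw AB D S t)) ∧
    (∀ (U : Matrix (Fin dx ⊕ Fin du) (Fin dx ⊕ Fin du) ℝ) (s : ℝ),
        U.PosSemidef → 0 < s → s < 1 → slsConstraint AB D U s →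
        ((σw ^ 2 / (1 - s)) • U).PosSemidef ∧ 0 ≤ s * σw ^ 2 / (1 - s) ∧
          lqrConstraint σw AB D ((σw ^ 2 / (1 - s)) • U) (s * σw ^ 2 / (1 - s))) ∧
    (∀ (S : Matrix (Fin dx ⊕ Fin du) (Fin dx ⊕ Fin du) ℝ) (t : ℝ),
        S.PosSemidef → 0 ≤ t → lqrConstraint σw AB D S t →
        ((1 / (t + σw ^ 2)) • S).PosSemidef ∧ 0 ≤ t / (t + σw ^ 2) ∧
          t / (t + σw ^ 2) < 1 ∧
          slsConstraint AB D ((1 / (t + σw ^ 2)) • S) (t / (t + σw ^ 2))) := by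
  have hσ2 : 0 < σw ^ 2 := pow_pos hσw 2
  have fwd : ∀ (U : Matrix (Fin dx ⊕ Fin du) (Fin dx ⊕ Fin du) ℝ) (s : ℝ),
      U.PosSemidef → 0 < s → s < 1 → slsConstraint AB D U s →
      ((σw ^ 2 / (1 - s)) • U).PosSemidef ∧ 0 ≤ s * σw ^ 2 / (1 - s) ∧
        lqrConstraint σw AB D ((σw ^ 2 / (1 - s)) • U) (s * σw ^ 2 / (1 - s)) := by
    intro U s hU hs0 hs1 hcons
    have h1s : 0 < 1 - s := by linarith
    have h1s' : (1 : ℝ) - s ≠ 0 := ne_of_gt h1s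
    have hc : 0 < σw ^ 2 / (1 - s) := div_pos hσ2 h1s
    have ht : 0 ≤ s * σw ^ 2 / (1 - s) := by positivity
    refine ⟨psd_smul hU hc.le, ht, ?_⟩
    unfold lqrConstraint
    rw [key σw AB D U (σw ^ 2 / (1 - s)) s (s * σw ^ 2 / (1 - s))
      (by field_simp; ring) (by rw [div_mul_eq_mul_div, mul_comm])]
    exact psd_smul hcons hc.le
  have bwd : ∀ (S : Matrix (Fin dx ⊕ Fin du) (Fin dx ⊕ Fin du) ℝ) (t : ℝ),
      S.PosSemidef → 0 ≤ t → lqrConstraint σw AB D S t →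
      ((1 / (t + σw ^ 2)) • S).PosSemidef ∧ 0 ≤ t / (t + σw ^ 2) ∧
        t / (t + σw ^ 2) < 1 ∧
        slsConstraint AB D ((1 / (t + σw ^ 2)) • S) (t / (t + σw ^ 2)) := by
    intro S t hS ht hcons
    have htσ : 0 < t + σw ^ 2 := by linarith
    have hc : 0 < 1 / (t + σw ^ 2) := by positivity
    refine ⟨psd_smul hS hc.le, by positivity, (div_lt_one htσ).2 (by linarith), ?_⟩
    unfold slsConstraint
    rw [key2 σw AB D S (1 / (t + σw ^ 2)) (t / (t + σw ^ 2)) t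
      (one_div_mul_cancel htσ.ne') (by rw [one_div, ← div_eq_inv_mul])]
    exact psd_smul hcons hc.le
  refine ⟨⟨?_, ?_⟩, fwd, bwd⟩
  · rintro ⟨U, s, hU, hs0, hs1, hcons⟩
    obtain ⟨h1, h2, h3⟩ := fwd U s hU hs0 hs1 hcons
    exact ⟨_, _, h1, h2, h3⟩
  · rintro ⟨S, t, hS, ht, hcons⟩
    rcases eq_or_lt_of_le ht with h0 | h0
    · -- degenerate case t = 0 : then S = 0 and -σw²•1 is PSD
      subst h0
      unfold lqrConstraint at hcons
      have h22 := hcons.submatrix Sum.inr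
      rw [fb_inr, zero_smul, zero_sub] at h22
      have hS0 : S = 0 := psd_neg_eq_zero hS h22
      subst hS0
      have h11 := hcons.submatrix Sum.inl
      rw [fb_inl] at h11
      have e0 : (0 : Matrix (Fin dx ⊕ Fin du) (Fin dx ⊕ Fin du) ℝ).toBlocks₁₁ = 0 := rfl
      simp only [e0, Matrix.mul_zero, Matrix.zero_mul, sub_zero, zero_sub, zero_add] at h11
      have hneg1 : (-1 : Matrix (Fin dx) (Fin dx) ℝ).PosSemidef := by
        have := psd_smul h11 (c := (σw ^ 2)⁻¹) (by positivity)
        rwa [smul_neg, smul_smul, inv_mul_cancel₀ hσ2.ne', one_smul] at this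
      refine ⟨0, 1/2, Matrix.PosSemidef.zero, by norm_num, by norm_num, ?_⟩
      unfold slsConstraint
      simp only [e0, Matrix.mul_zero, Matrix.zero_mul, sub_zero, zero_sub]
      exact psd_fromBlocks_diag hneg1 (psd_smul hD.posSemidef (by norm_num))
    · obtain ⟨h1, _, h3, h4⟩ := bwd S t hS ht hcons
      exact ⟨_, _, h1, div_pos h0 (by linarith), h3, h4⟩
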